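/- Rees(A, F) is an R-subalgebra of the polynomial ring A[X] containing the variable X; the evaluation-at-1 homomorphism A[X] → A restricts to a surjective R-algebra homomorphism Rees(A, F) → A; and the kernel of this restricted homomorphism is the ideal of Rees(A, F) generated by the element X − 1. -/

import Mathlib

open Polynomial

/-- Let `R` be a commutative ring and `A` a commutative `R`-algebra with a
monotone multiplicative exhaustive filtration `F`. Then the Rees algebra
`{p : A[X] | ∀ i, p.coeff i ∈ F i}` is an `R`-subalgebra of `A[X]` containing `X`; the
evaluation-at-1 homomorphism restricts to a surjective `R`-algebra homomorphism from it to `A`,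
whose kernel is the ideal generated by `X - 1`. -/
theorem stmt0 (R A : Type*) [CommRing R] [CommRing A] [Algebra R A]
    (F : ℕ → Submodule R A) (hmono : Monotone F) (hone : (1 : A) ∈ F 0)
    (hmul : ∀ i j, F i * F j ≤ F (i + j)) (hsup : (⨆ i, F i) = ⊤) :
    ∃ S : Subalgebra R (Polynomial A),
      (S : Set (Polynomial A)) = {p : Polynomial A | ∀ i, p.coeff i ∈ F i} ∧
      ∃ x : S, (x : Polynomial A) = Polynomial.X ∧
      ∃ φ : S →ₐ[R] A,
        (∀ p : S, φ p = Polynomial.eval 1 (p : Polynomial A)) ∧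
        Function.Surjective φ ∧
        RingHom.ker φ = Ideal.span {x - 1} := by
  refine ⟨{ carrier := {p : Polynomial A | ∀ i, p.coeff i ∈ F i}
            add_mem' := fun {p q} hp hq i => by
              simpa [Polynomial.coeff_add] using add_mem (hp i) (hq i)
            mul_mem' := fun {p q} hp hq i => by
              rw [Polynomial.coeff_mul]
              refine Submodule.sum_mem _ fun x hx => ?_
              have hxy := Finset.HasAntidiagonal.mem_antidiagonal.mp hx
              exact hxy ▸ hmul x.1 x.2 (Submodule.mul_mem_mul (hp x.1) (hq x.2))
            algebraMap_mem' := fun r i => by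
              rw [Polynomial.algebraMap_apply, Polynomial.coeff_C]
              split
              · next h =>
                  subst h
                  rw [Algebra.algebraMap_eq_smul_one]
                  exact Submodule.smul_mem _ _ hone
              · exact zero_mem _ }, rfl, ?_⟩
  set S : Subalgebra R (Polynomial A) :=
    { carrier := {p : Polynomial A | ∀ i, p.coeff i ∈ F i}, add_mem' := _, mul_mem' := _,
      algebraMap_mem' := _ } with hS
  have hXmem : (X : Polynomial A) ∈ S := by
    intro i
    rw [Polynomial.coeff_X]
    split
    · next h => exact h ▸ hmono (Nat.zero_le 1) hone
    · exact zero_mem _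
  refine ⟨⟨X, hXmem⟩, rfl, ((Polynomial.aeval (1:A)).restrictScalars R).comp S.val, ?_, ?_, ?_⟩
  · intro p
    simp [Polynomial.aeval_def, Polynomial.eval_map]
  · intro a
    have : a ∈ ⨆ i, F i := hsup ▸ Submodule.mem_top
    obtain ⟨n, hn⟩ := (Submodule.mem_iSup_of_directed _ hmono.directed_le).mp this
    refine ⟨⟨Polynomial.monomial n a, fun i => ?_⟩, ?_⟩
    · rw [Polynomial.coeff_monomial]
      split
      · next h => exact h ▸ hn
      · exact zero_mem _
    · simp [Polynomial.aeval_def, Polynomial.eval_map]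
  · ext p
    rw [RingHom.mem_ker, Ideal.mem_span_singleton]
    have hcoe : ∀ q : S, ((((⟨X, hXmem⟩ : S) - 1) * q : S) : Polynomial A) = (X - 1) * (q : Polynomial A) := by
      intro q; push_cast; ring
    constructor
    · intro hp
      have heval : Polynomial.eval 1 (p : Polynomial A) = 0 := by
        simpa [Polynomial.aeval_def, Polynomial.eval_map, Polynomial.coe_aeval_eq_eval] using hp
      set q := (p : Polynomial A) /ₘ (X - C 1) with hqdef
      have hmod : (p : Polynomial A) %ₘ (X - C 1) = 0 := by
        rw [Polynomial.modByMonic_X_sub_C_eq_C_eval, heval, map_zero]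
      have hfac : (p : Polynomial A) = (X - C 1) * q := by
        conv_lhs => rw [← Polynomial.modByMonic_add_div (p : Polynomial A)
          (X - C 1)]
        rw [hmod, zero_add]
      have hrec : ∀ i, q.coeff i ∈ F i := by
        intro i
        induction i with
        | zero =>
          have h0 : (p : Polynomial A).coeff 0 = -q.coeff 0 := by
            rw [hfac]; simp [Polynomial.coeff_mul, sub_mul]
          have : q.coeff 0 = -(p : Polynomial A).coeff 0 := by rw [h0, neg_neg]
          exact this ▸ neg_mem (p.2 0)
        | succ n ih =>
          have h1 : (p : Polynomial A).coeff (n+1) = q.coeff n - q.coeff (n+1) := by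
            rw [hfac, sub_mul, Polynomial.coeff_sub, Polynomial.coeff_X_mul]
            simp
          have : q.coeff (n+1) = q.coeff n - (p : Polynomial A).coeff (n+1) := by
            rw [h1]; ring
          rw [this]
          exact sub_mem (hmono (Nat.le_succ n) ih) (p.2 (n+1))
      refine ⟨⟨q, hrec⟩, ?_⟩
      apply Subtype.ext
      rw [hcoe]
      simpa using hfac
    · rintro ⟨c, rfl⟩
      have : ((((⟨X, hXmem⟩ : S) - 1) * c : S) : Polynomial A) = (X - 1) * (c : Polynomial A) :=
        hcoe c
      simp only [AlgHom.coe_comp, Function.comp_apply, Subalgebra.coe_val, this]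
      simp [Polynomial.aeval_def, Polynomial.eval_map]
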